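/- Let K be an ordered field, ]⁻0,1⁺[ = {x ∈ K | 0 ⪅ x ⪅ 1}, and 1⁺ = {x ∈ K | x > 1 and x ≈ 1}. Then for all a, b ∈ ]⁻0,1⁺[ and all c ∈ 1⁺ ∪ {1}, the element c - a + ab belongs to ]⁻0,1⁺[. -/

import Mathlib

variable {K : Type*} [Field K] [LinearOrder K] [IsStrictOrderedRing K]

def Infinitesimal (x : K) : Prop := ∀ q : ℚ, 0 < q → |x| ≤ (q : K)

def InfClose (x y : K) : Prop := Infinitesimal (x - y)

def RoughLE (x y : K) : Prop := x < y ∨ InfClose x y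

def NSUnitInterval (K : Type*) [Field K] [LinearOrder K] [IsStrictOrderedRing K] : Set K :=
  {x : K | RoughLE 0 x ∧ RoughLE x 1}

lemma roughLE_iff (x y : K) : RoughLE x y ↔ ∀ q : ℚ, 0 < q → x ≤ y + (q : K) := by
  constructor
  · rintro (h | h) q hq
    · have : (0:K) < (q:K) := by exact_mod_cast hq
      linarith
    · have := h q hq
      have := abs_le.mp this
      linarith [this.2]
  · intro h
    by_cases hlt : x < y
    · exact Or.inl hlt
    · push_neg at hlt
      refine Or.inr (fun q hq => ?_)
      rw [abs_of_nonneg (by linarith)]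
      have := h q hq
      linarith

theorem nsui_impl_closed (a b c : K)
    (ha : a ∈ NSUnitInterval K) (hb : b ∈ NSUnitInterval K)
    (hc : c ∈ {x : K | 1 < x ∧ InfClose x 1} ∪ {1}) :
    c - a + a * b ∈ NSUnitInterval K := by
  obtain ⟨ha0, ha1⟩ := ha
  obtain ⟨hb0, hb1⟩ := hb
  rw [roughLE_iff] at ha0 ha1 hb0 hb1
  have hc1 : 1 ≤ c := by
    rcases hc with ⟨h, _⟩ | h
    · exact le_of_lt h
    · simp_all
  have hcq : ∀ q : ℚ, 0 < q → c ≤ 1 + (q : K) := by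
    rcases hc with ⟨_, h⟩ | h
    · intro q hq
      have := abs_le.mp (h q hq)
      linarith [this.2]
    · intro q hq
      have : (0:K) < (q:K) := by exact_mod_cast hq
      simp_all; linarith
  constructor <;> rw [roughLE_iff] <;> intro q hq
  all_goals {
    set r : ℚ := min (q/8) 1 with hr
    have hrq : 0 < r := lt_min (by linarith) one_pos
    have hr8 : r ≤ q/8 := min_le_left _ _
    have hr1 : r ≤ 1 := min_le_right _ _
    have ha' := ha1 _ hrq
    have ha'' := ha0 _ hrq
    have hb' := hb1 _ hrq
    have hb'' := hb0 _ hrq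
    have hcb := hcq _ hrq
    have hrK : (0:K) < (r:K) := by exact_mod_cast hrq
    have hr1K : (r:K) ≤ 1 := by exact_mod_cast hr1
    have hr8K : (r:K) ≤ (q:K)/8 := by exact_mod_cast hr8
    push_cast at ha' ha'' hb' hb'' hcb ⊢
    nlinarith [mul_nonneg (by linarith : (0:K) ≤ 1 + (r:K) - a) (by linarith : (0:K) ≤ 1 + (r:K) - b),
      mul_nonneg (by linarith : (0:K) ≤ a + (r:K)) (by linarith : (0:K) ≤ b + (r:K)),
      mul_nonneg (by linarith : (0:K) ≤ a + (r:K)) (by linarith : (0:K) ≤ 1 + (r:K) - b),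
      mul_nonneg (by linarith : (0:K) ≤ 1 + (r:K) - a) (by linarith : (0:K) ≤ b + (r:K))]
  }
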